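/- For every finite graph G and every subset S of its vertices, the boxicity of G is at most the boxicity of G − S plus the cardinality of S, i.e. box(G) ≤ box(G − S) + |S|. -/

import Mathlib

/-- `lo, hi : V → Fin d → ℝ` give a `d`-box representation of `G`. -/
def IsBoxRep {V : Type*} {d : ℕ} (G : SimpleGraph V) (lo hi : V → Fin d → ℝ) : Prop :=
  (∀ v, lo v ≤ hi v) ∧
    ∀ u v : V, u ≠ v →
      (G.Adj u v ↔ (Set.Icc (lo u) (hi u) ∩ Set.Icc (lo v) (hi v)).Nonempty)

/-- `G` has a `d`-box representation. -/
def HasBoxRep {V : Type*} (G : SimpleGraph V) (d : ℕ) : Prop :=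
  ∃ lo hi : V → Fin d → ℝ, IsBoxRep G lo hi

/-- The boxicity of `G`: the least `d` such that `G` has a `d`-box representation. -/
noncomputable def boxicity {V : Type*} (G : SimpleGraph V) : ℕ :=
  sInf {d | HasBoxRep G d}

/-- Intersection of two boxes is nonempty iff coordinatewise intersection. -/
lemma icc_inter_nonempty {ι : Type*} (a b c d : ι → ℝ) (hab : a ≤ b) (hcd : c ≤ d) :
    (Set.Icc a b ∩ Set.Icc c d).Nonempty ↔ ∀ i, a i ≤ d i ∧ c i ≤ b i := by
  constructor
  · rintro ⟨x, ⟨hxa, hxb⟩, ⟨hxc, hxd⟩⟩ i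
    exact ⟨le_trans (hxa i) (hxd i), le_trans (hxc i) (hxb i)⟩
  · intro h
    refine ⟨fun i => max (a i) (c i), ⟨fun i => le_max_left _ _,
      fun i => max_le (hab i) (h i).2⟩,
      ⟨fun i => le_max_right _ _, fun i => max_le (h i).1 (hcd i)⟩⟩

/-- A box representation indexed by an arbitrary type, in pointwise form. -/
def IsBoxRep' {V ι : Type*} (G : SimpleGraph V) (lo hi : V → ι → ℝ) : Prop :=
  (∀ v i, lo v i ≤ hi v i) ∧
    ∀ u v : V, u ≠ v →
      (G.Adj u v ↔ ∀ i, lo u i ≤ hi v i ∧ lo v i ≤ hi u i)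

lemma hasBoxRep_of_rep' {V ι : Type*} {G : SimpleGraph V} {n : ℕ} (e : Fin n ≃ ι)
    {lo hi : V → ι → ℝ} (h : IsBoxRep' G lo hi) : HasBoxRep G n := by
  refine ⟨fun v i => lo v (e i), fun v i => hi v (e i), fun v i => h.1 v (e i), ?_⟩
  intro u v huv
  rw [h.2 u v huv,
    icc_inter_nonempty _ _ _ _ (fun i => h.1 u (e i)) (fun i => h.1 v (e i))]
  exact ⟨fun h i => by simpa using h (e i), fun h i => by simpa using h (e.symm i)⟩

open Classical in
/-- Every graph has a box representation indexed by its own vertex set. -/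
lemma isBoxRep'_self {V : Type*} (G : SimpleGraph V) :
    IsBoxRep' G
      (fun v w => if v = w then 0 else if G.Adj w v then -1 else 1)
      (fun v w => if v = w then 0 else if G.Adj w v then 1 else 2) := by
  constructor
  · intro v w
    by_cases h1 : v = w <;> by_cases h2 : G.Adj w v <;> simp [h1, h2] <;> norm_num
  · intro u v huv
    constructor
    · intro hadj w
      by_cases hu : u = w
      · subst hu
        have hv : ¬ v = u := fun h => huv h.symm
        simp [hv, hadj, hadj.symm]
      · by_cases hv : v = w
        · subst hv
          simp [hu, hadj, hadj.symm]
        · by_cases h2 : G.Adj w v <;> by_cases h3 : G.Adj w u <;>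
            simp [hu, hv, h2, h3] <;> norm_num
    · intro h
      have := (h u).2
      have hv : ¬ v = u := fun h => huv h.symm
      simp [hv] at this
      by_cases h2 : G.Adj u v
      · exact h2
      · simp [h2] at this; linarith


/-- For any finite graph `G` and any set `S` of vertices,
`box(G) ≤ box(G - S) + |S|`. -/
theorem boxicity_le_boxicity_delete_add {V : Type*} [Fintype V] (G : SimpleGraph V)
    (S : Set V) :
    boxicity G ≤ boxicity (G.induce Sᶜ) + S.ncard := by
  classical
  set H := G.induce Sᶜ with hH
  have hne : HasBoxRep H (Fintype.card ↥Sᶜ) :=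
    hasBoxRep_of_rep' (Fintype.equivFin ↥Sᶜ).symm (isBoxRep'_self H)
  obtain ⟨lo, hi, hlh, hadj⟩ : HasBoxRep H (boxicity H) := Nat.sInf_mem (s := {d | HasBoxRep H d}) ⟨_, hne⟩
  have hadj' : ∀ u v : ↥Sᶜ, u ≠ v →
      (H.Adj u v ↔ ∀ i, lo u i ≤ hi v i ∧ lo v i ≤ hi u i) := by
    intro u v h
    rw [hadj u v h, icc_inter_nonempty _ _ _ _ (hlh u) (hlh v)]
  obtain ⟨M, hM⟩ : ∃ M : ℝ, ∀ (v : ↥Sᶜ) (i : Fin (boxicity H)),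
      max (-(lo v i)) (hi v i) ≤ M := by
    obtain ⟨M, hM⟩ := (Finset.univ.image
      fun p : ↥Sᶜ × Fin (boxicity H) => max (-(lo p.1 p.2)) (hi p.1 p.2)).exists_le
    exact ⟨M, fun v i => hM _ (Finset.mem_image_of_mem _ (Finset.mem_univ (v, i)))⟩
  set M' : ℝ := max M 0 with hM'
  have hM0 : (0:ℝ) ≤ M' := le_max_right _ _
  have hMlo : ∀ (w : ↥Sᶜ) (i : Fin (boxicity H)), -M' ≤ lo w i := by
    intro w i
    have h1 : -(lo w i) ≤ M' :=
      le_trans (le_trans (le_max_left _ _) (hM w i)) (le_max_left _ _)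
    linarith
  have hMhi : ∀ (w : ↥Sᶜ) (i : Fin (boxicity H)), hi w i ≤ M' := fun w i =>
    le_trans (le_trans (le_max_right _ _) (hM w i)) (le_max_left _ _)
  -- construct a representation of `G` indexed by `Fin (boxicity H) ⊕ ↥S`
  set lo' : V → (Fin (boxicity H) ⊕ ↥S) → ℝ := fun v j =>
    Sum.rec (fun i => if h : v ∈ S then -M' else lo ⟨v, h⟩ i)
      (fun s => if v = ↑s then 0 else if G.Adj ↑s v then -1 else 1) j with hlo'
  set hi' : V → (Fin (boxicity H) ⊕ ↥S) → ℝ := fun v j =>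
    Sum.rec (fun i => if h : v ∈ S then M' else hi ⟨v, h⟩ i)
      (fun s => if v = ↑s then 0 else if G.Adj ↑s v then 1 else 2) j with hhi'
  have key : IsBoxRep' G lo' hi' := by
    constructor
    · rintro v (i | s)
      · by_cases h : v ∈ S
        · simp only [lo', hi', dif_pos h]
          linarith
        · simpa [lo', hi', h] using hlh ⟨v, h⟩ i
      · by_cases h1 : v = ↑s <;> by_cases h2 : G.Adj ↑s v <;>
          simp [lo', hi', h1, h2] <;> norm_num
    · intro u v huv
      constructor
      · intro hadj_uv
        rintro (i | s)
        · by_cases hu : u ∈ S <;> by_cases hv : v ∈ S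
          · simp only [lo', hi', dif_pos hu, dif_pos hv]
            constructor <;> linarith
          · simp only [lo', hi', dif_pos hu, dif_neg hv]
            exact ⟨le_trans (hMlo ⟨v, hv⟩ i) (hlh ⟨v, hv⟩ i), le_trans (hlh ⟨v, hv⟩ i) (hMhi ⟨v, hv⟩ i)⟩
          · simp only [lo', hi', dif_neg hu, dif_pos hv]
            exact ⟨le_trans (hlh ⟨u, hu⟩ i) (hMhi ⟨u, hu⟩ i), le_trans (hMlo ⟨u, hu⟩ i) (hlh ⟨u, hu⟩ i)⟩
          · have hne2 : (⟨u, hu⟩ : ↥Sᶜ) ≠ ⟨v, hv⟩ := fun h =>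
              huv (congrArg Subtype.val h)
            have hHadj : H.Adj ⟨u, hu⟩ ⟨v, hv⟩ := by
              rw [hH]
              exact hadj_uv
            have := (hadj' _ _ hne2).mp hHadj i
            simp only [lo', hi', dif_neg hu, dif_neg hv]
            exact this
        · by_cases hu : u = ↑s
          · have hv : ¬ v = ↑s := fun h => huv (hu.trans h.symm)
            have hA : G.Adj ↑s v := hu ▸ hadj_uv
            simp [lo', hi', hu, hv, hA]
          · by_cases hv : v = ↑s
            · have hA : G.Adj ↑s u := hv ▸ hadj_uv.symm
              simp [lo', hi', hu, hv, hA]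
            · by_cases h2 : G.Adj ↑s v <;> by_cases h3 : G.Adj ↑s u <;>
                simp [lo', hi', hu, hv, h2, h3] <;> norm_num
      · intro hpt
        by_cases hu : u ∈ S
        · have h := (hpt (Sum.inr ⟨u, hu⟩)).2
          by_cases h2 : G.Adj u v
          · exact h2
          · have hv : ¬ v = u := fun h => huv h.symm
            simp [lo', hi', hv, h2] at h
            linarith
        · by_cases hv : v ∈ S
          · have h := (hpt (Sum.inr ⟨v, hv⟩)).1
            by_cases h2 : G.Adj v u
            · exact h2.symm
            · simp [lo', hi', huv, h2] at h
              linarith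
          · have hne2 : (⟨u, hu⟩ : ↥Sᶜ) ≠ ⟨v, hv⟩ := fun h =>
              huv (congrArg Subtype.val h)
            have hHA : H.Adj ⟨u, hu⟩ ⟨v, hv⟩ := by
              rw [hadj' _ _ hne2]
              intro i
              have h := hpt (Sum.inl i)
              simpa [lo', hi', hu, hv] using h
            rw [hH] at hHA
            exact hHA
  have ecard : Fintype.card ↥S = S.ncard := by
    rw [← Nat.card_coe_set_eq, Nat.card_eq_fintype_card]
  have e : Fin (boxicity H + S.ncard) ≃ (Fin (boxicity H) ⊕ ↥S) :=
    finSumFinEquiv.symm.trans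
      ((Equiv.refl (Fin (boxicity H))).sumCongr
        ((Fintype.equivFin ↥S).trans (finCongr ecard)).symm)
  exact Nat.sInf_le (hasBoxRep_of_rep' e key)
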